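/- Let G be the 1-subdivision of the complete graph K_i (replace every edge (v,w) by a path v–u–w through a new vertex u). Then every pointed CF-coloring of G requires at least i colors, while G admits a closed CF-coloring with 2 colors. -/

import Mathlib

/-- The 1-subdivision of the complete graph `K_i`: the vertices are the `i` original
vertices (`Sum.inl`) together with one subdivision vertex for each pair `v < w`
(`Sum.inr`); each subdivision vertex is adjacent exactly to the two endpoints of its pair. -/
def subdivKVertex (i : ℕ) : Type := Fin i ⊕ {p : Fin i × Fin i // p.1 < p.2}

def subdivK (i : ℕ) : SimpleGraph (subdivKVertex i) where
  Adj x y :=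
    (∃ (v : Fin i) (u : {p : Fin i × Fin i // p.1 < p.2}),
      x = Sum.inl v ∧ y = Sum.inr u ∧ (v = u.1.1 ∨ v = u.1.2)) ∨
    (∃ (v : Fin i) (u : {p : Fin i × Fin i // p.1 < p.2}),
      y = Sum.inl v ∧ x = Sum.inr u ∧ (v = u.1.1 ∨ v = u.1.2))
  symm := ⟨fun x y h => Or.symm h⟩
  loopless := ⟨by
    rintro x (⟨v, u, h1, h2, -⟩ | ⟨v, u, h1, h2, -⟩) <;> subst h1 <;> simp at h2⟩

/-- A pointed CF-coloring. -/
def PointedCF {V : Type*} (G : SimpleGraph V) {α : Type*} (c : V → α) : Prop :=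
  ∀ v : V, (G.neighborSet v).Nonempty →
    ∃ u ∈ G.neighborSet v, ∀ w ∈ G.neighborSet v, w ≠ u → c w ≠ c u

/-- A closed CF-coloring. -/
def ClosedCF {V : Type*} (G : SimpleGraph V) {α : Type*} (c : V → α) : Prop :=
  ∀ v : V, ∃ u ∈ insert v (G.neighborSet v),
    ∀ w ∈ insert v (G.neighborSet v), w ≠ u → c w ≠ c u

/-- Every pointed CF-coloring of the 1-subdivision of `K_i` requires at least `i` colors,
while the graph admits a closed CF-coloring with 2 colors. -/
theorem subdivK_pointed_vs_closed (i : ℕ) :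
    (∀ (k : ℕ) (c : subdivKVertex i → Fin k), PointedCF (subdivK i) c → i ≤ k) ∧
    (∃ c : subdivKVertex i → Fin 2, ClosedCF (subdivK i) c) := by

  constructor
  · intro k c hc
    have key : ∀ v w : Fin i, v < w → c (Sum.inl v) ≠ c (Sum.inl w) := by
      intro v w hvw heq
      set u : {p : Fin i × Fin i // p.1 < p.2} := ⟨(v, w), hvw⟩ with hu
      have hmem : ∀ x, x ∈ (subdivK i).neighborSet (Sum.inr u) ↔
          x = Sum.inl v ∨ x = Sum.inl w := by
        intro x
        constructor
        · rintro (⟨v', u', h1, h2, h3⟩ | ⟨v', u', h1, h2, h3⟩)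
          · exact absurd h1 (by simp)
          · subst h1
            have : u = u' := Sum.inr.inj h2
            subst this
            rcases h3 with rfl | rfl
            · left; rfl
            · right; rfl
        · rintro (rfl | rfl)
          · exact Or.inr ⟨v, u, rfl, rfl, Or.inl rfl⟩
          · exact Or.inr ⟨w, u, rfl, rfl, Or.inr rfl⟩
      obtain ⟨u', hu', hprop⟩ := hc (Sum.inr u) ⟨Sum.inl v, (hmem _).mpr (Or.inl rfl)⟩
      have hne : (Sum.inl v : subdivKVertex i) ≠ Sum.inl w := by
        simp [hvw.ne]
      rcases (hmem _).mp hu' with rfl | rfl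
      · exact hprop (Sum.inl w) ((hmem _).mpr (Or.inr rfl)) hne.symm heq.symm
      · exact hprop (Sum.inl v) ((hmem _).mpr (Or.inl rfl)) hne heq
    have hinj : Function.Injective (fun v : Fin i => c (Sum.inl v)) := by
      intro v w h
      by_contra hne
      rcases lt_or_gt_of_ne hne with hlt | hgt
      · exact key v w hlt h
      · exact key w v hgt h.symm
    simpa using Fintype.card_le_of_injective _ hinj
  · refine ⟨Sum.elim (fun _ => (0 : Fin 2)) (fun _ => 1), ?_⟩
    intro x
    refine ⟨x, Set.mem_insert _ _, ?_⟩
    intro y hy hne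
    rcases hy with rfl | hy
    · exact absurd rfl hne
    · rcases hy with ⟨v, u, h1, h2, h3⟩ | ⟨v, u, h1, h2, h3⟩ <;> subst h1 <;> subst h2 <;> simp
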